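/- Every finite bipartite multigraph with maximum degree Δ admits a proper edge colouring using at most Δ colours; equivalently, its edge multiset can be partitioned into at most Δ matchings. -/

import Mathlib

open Multiset

private lemma map_erase_cons' {α β : Type*} [DecidableEq α] (f : α → β)
    {e : α} {P : Multiset α} (h : e ∈ P) :
    P.map f = f e ::ₘ (P.erase e).map f := by
  conv_lhs => rw [← Multiset.cons_erase h]
  rw [Multiset.map_cons]

private lemma kempe_swap {α β : Type*} [DecidableEq α] [DecidableEq β] :
    ∀ n (P Q : Multiset (α × β)), (P + Q).card ≤ n →
    (P.map Prod.fst).Nodup → (P.map Prod.snd).Nodup →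
    (Q.map Prod.fst).Nodup → (Q.map Prod.snd).Nodup →
    ∀ a b, a ∉ P.map Prod.fst → b ∉ Q.map Prod.snd →
    ∃ P' Q', P' + Q' = P + Q ∧
      (P'.map Prod.fst).Nodup ∧ (P'.map Prod.snd).Nodup ∧
      (Q'.map Prod.fst).Nodup ∧ (Q'.map Prod.snd).Nodup ∧
      a ∉ P'.map Prod.fst ∧ b ∉ P'.map Prod.snd := by
  intro n
  induction n with
  | zero =>
    intro P Q hc hP1 hP2 hQ1 hQ2 a b ha hb
    have hP0 : P = 0 := by
      rw [Multiset.card_add] at hc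
      exact Multiset.card_eq_zero.mp (by omega)
    subst hP0
    exact ⟨0, Q, rfl, by simp, by simp, hQ1, hQ2, by simp, by simp⟩
  | succ n ih =>
    intro P Q hc hP1 hP2 hQ1 hQ2 a b ha hb
    by_cases hbP : b ∈ P.map Prod.snd
    · obtain ⟨e, heP, heb⟩ := Multiset.mem_map.mp hbP
      obtain ⟨x, b'⟩ := e
      replace heP : (x, b) ∈ P := heb ▸ heP
      clear heb
      have hxa : x ≠ a := by
        rintro rfl
        exact ha (Multiset.mem_map.mpr ⟨(x, b), heP, rfl⟩)
      have hPsnd : P.map Prod.snd = b ::ₘ (P.erase (x, b)).map Prod.snd :=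
        map_erase_cons' _ heP
      have hPfst : P.map Prod.fst = x ::ₘ (P.erase (x, b)).map Prod.fst :=
        map_erase_cons' _ heP
      have hbPe : b ∉ (P.erase (x, b)).map Prod.snd := by
        have := hP2; rw [hPsnd] at this
        exact (Multiset.nodup_cons.mp this).1
      have hxPe : x ∉ (P.erase (x, b)).map Prod.fst := by
        have := hP1; rw [hPfst] at this
        exact (Multiset.nodup_cons.mp this).1
      have hPe1 : ((P.erase (x, b)).map Prod.fst).Nodup := by
        have := hP1; rw [hPfst] at this
        exact (Multiset.nodup_cons.mp this).2
      have hPe2 : ((P.erase (x, b)).map Prod.snd).Nodup := by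
        have := hP2; rw [hPsnd] at this
        exact (Multiset.nodup_cons.mp this).2
      have haPe : a ∉ (P.erase (x, b)).map Prod.fst := fun h =>
        ha (Multiset.mem_of_le (Multiset.map_le_map (Multiset.erase_le _ _)) h)
      by_cases hxQ : x ∈ Q.map Prod.fst
      · obtain ⟨e', he'Q, he'x⟩ := Multiset.mem_map.mp hxQ
        obtain ⟨x', y⟩ := e'
        replace he'Q : (x, y) ∈ Q := he'x ▸ he'Q
        clear he'x
        have hyb : y ≠ b := by
          rintro rfl
          exact hb (Multiset.mem_map.mpr ⟨(x, y), he'Q, rfl⟩)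
        have hQsnd : Q.map Prod.snd = y ::ₘ (Q.erase (x, y)).map Prod.snd :=
          map_erase_cons' _ he'Q
        have hQfst : Q.map Prod.fst = x ::ₘ (Q.erase (x, y)).map Prod.fst :=
          map_erase_cons' _ he'Q
        have hyQe : y ∉ (Q.erase (x, y)).map Prod.snd := by
          have := hQ2; rw [hQsnd] at this
          exact (Multiset.nodup_cons.mp this).1
        have hxQe : x ∉ (Q.erase (x, y)).map Prod.fst := by
          have := hQ1; rw [hQfst] at this
          exact (Multiset.nodup_cons.mp this).1
        have hQe1 : ((Q.erase (x, y)).map Prod.fst).Nodup := by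
          have := hQ1; rw [hQfst] at this
          exact (Multiset.nodup_cons.mp this).2
        have hQe2 : ((Q.erase (x, y)).map Prod.snd).Nodup := by
          have := hQ2; rw [hQsnd] at this
          exact (Multiset.nodup_cons.mp this).2
        have hbQe : b ∉ (Q.erase (x, y)).map Prod.snd := fun h =>
          hb (Multiset.mem_of_le (Multiset.map_le_map (Multiset.erase_le _ _)) h)
        have hcard : ((P.erase (x, b)) + (Q.erase (x, y))).card ≤ n := by
          rw [Multiset.card_add, Multiset.card_erase_of_mem heP,
            Multiset.card_erase_of_mem he'Q]
          rw [Multiset.card_add] at hc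
          have h1 : 0 < Multiset.card P := Multiset.card_pos_iff_exists_mem.mpr ⟨_, heP⟩
          have h2 : 0 < Multiset.card Q := Multiset.card_pos_iff_exists_mem.mpr ⟨_, he'Q⟩
          simp only [Nat.pred_eq_sub_one]
          omega
        obtain ⟨P₁, Q₁, hsum, h11, h12, h21, h22, haP₁, hyP₁⟩ :=
          ih (P.erase (x, b)) (Q.erase (x, y)) hcard hPe1 hPe2 hQe1 hQe2 a y haPe hyQe
        -- x does not occur as a left vertex in P₁ or Q₁
        have hxsum : x ∉ (P₁ + Q₁).map Prod.fst := by
          rw [hsum, Multiset.map_add, Multiset.mem_add]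
          rintro (h | h)
          exacts [hxPe h, hxQe h]
        have hxP₁ : x ∉ P₁.map Prod.fst := fun h =>
          hxsum (by rw [Multiset.map_add, Multiset.mem_add]; exact Or.inl h)
        have hxQ₁ : x ∉ Q₁.map Prod.fst := fun h =>
          hxsum (by rw [Multiset.map_add, Multiset.mem_add]; exact Or.inr h)
        -- b does not occur as a right vertex in P₁ or Q₁
        have hbsum : b ∉ (P₁ + Q₁).map Prod.snd := by
          rw [hsum, Multiset.map_add, Multiset.mem_add]
          rintro (h | h)
          exacts [hbPe h, hbQe h]
        have hbP₁ : b ∉ P₁.map Prod.snd := fun h =>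
          hbsum (by rw [Multiset.map_add, Multiset.mem_add]; exact Or.inl h)
        have hbQ₁ : b ∉ Q₁.map Prod.snd := fun h =>
          hbsum (by rw [Multiset.map_add, Multiset.mem_add]; exact Or.inr h)
        refine ⟨(x, y) ::ₘ P₁, (x, b) ::ₘ Q₁, ?_, ?_, ?_, ?_, ?_, ?_, ?_⟩
        · rw [Multiset.cons_add, Multiset.add_cons, hsum]
          conv_rhs => rw [← Multiset.cons_erase heP, ← Multiset.cons_erase he'Q]
          rw [Multiset.cons_add, Multiset.add_cons, Multiset.cons_swap]
        · rw [Multiset.map_cons]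
          exact Multiset.nodup_cons.mpr ⟨hxP₁, h11⟩
        · rw [Multiset.map_cons]
          exact Multiset.nodup_cons.mpr ⟨hyP₁, h12⟩
        · rw [Multiset.map_cons]
          exact Multiset.nodup_cons.mpr ⟨hxQ₁, h21⟩
        · rw [Multiset.map_cons]
          exact Multiset.nodup_cons.mpr ⟨hbQ₁, h22⟩
        · rw [Multiset.map_cons, Multiset.mem_cons]
          rintro (h | h)
          exacts [hxa h.symm, haP₁ h]
        · rw [Multiset.map_cons, Multiset.mem_cons]
          rintro (h | h)
          exacts [(hyb h.symm).elim, hbP₁ h]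
      · refine ⟨P.erase (x, b), (x, b) ::ₘ Q, ?_, hPe1, hPe2, ?_, ?_, haPe, hbPe⟩
        · rw [Multiset.add_cons, ← Multiset.cons_add, Multiset.cons_erase heP]
        · rw [Multiset.map_cons]
          exact Multiset.nodup_cons.mpr ⟨hxQ, hQ1⟩
        · rw [Multiset.map_cons]
          exact Multiset.nodup_cons.mpr ⟨hb, hQ2⟩
    · exact ⟨P, Q, rfl, hP1, hP2, hQ1, hQ2, ha, hbP⟩

private lemma free_colour {γ : Type*} [DecidableEq γ] {Δ : ℕ} (M : Fin Δ → Multiset γ)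
    (c : γ) (h : ∑ i, ((M i).filter (fun x => x = c)).card < Δ) :
    ∃ i, c ∉ M i := by
  by_contra hcon
  push_neg at hcon
  have h1 : ∀ i : Fin Δ, 1 ≤ ((M i).filter (fun x => x = c)).card := by
    intro i
    rw [Nat.one_le_iff_ne_zero, Ne, Multiset.card_eq_zero]
    intro h0
    have : c ∈ Multiset.filter (fun x => x = c) (M i) :=
      Multiset.mem_filter.mpr ⟨hcon i, rfl⟩
    rw [h0] at this
    exact Multiset.notMem_zero _ this
  have := Finset.sum_le_sum (fun i (_ : i ∈ Finset.univ) => h1 i)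
  simp at this
  omega

private lemma card_filter_map {α β : Type*} (f : α → β) (s : Multiset α)
    (p : β → Prop) [DecidablePred p] :
    ((s.map f).filter p).card = (s.filter (fun x => p (f x))).card := by
  rw [← Multiset.countP_eq_card_filter, ← Multiset.countP_eq_card_filter,
    Multiset.countP_map, Multiset.countP_eq_card_filter]

private lemma card_filter_finsum {ι γ : Type*} [DecidableEq ι] (s : Finset ι) (M : ι → Multiset γ)
    (p : γ → Prop) [DecidablePred p] :
    (Multiset.filter p (∑ i ∈ s, M i)).card = ∑ i ∈ s, (Multiset.filter p (M i)).card := by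
  induction s using Finset.induction with
  | empty => simp
  | insert _ _ h ih =>
    rw [Finset.sum_insert h, Finset.sum_insert h, Multiset.filter_add,
      Multiset.card_add, ih]

/-- Kőnig's edge-colouring theorem for bipartite multigraphs: the edge multiset `E`
(edges from a left vertex in `α` to a right vertex in `β`, with multiplicity) of a
bipartite multigraph with maximum degree at most `Δ` can be partitioned into at
most `Δ` matchings. -/
theorem bipartite_multigraph_edge_colouring {α β : Type*} [DecidableEq α] [DecidableEq β]
    (E : Multiset (α × β)) (Δ : ℕ)
    (hL : ∀ a : α, (E.filter (fun e => e.1 = a)).card ≤ Δ)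
    (hR : ∀ b : β, (E.filter (fun e => e.2 = b)).card ≤ Δ) :
    ∃ M : Fin Δ → Multiset (α × β), (∑ i, M i) = E ∧
      ∀ i, ((M i).map Prod.fst).Nodup ∧ ((M i).map Prod.snd).Nodup := by
  induction E using Multiset.induction_on with
  | empty => exact ⟨fun _ => 0, by simp, fun i => ⟨by simp, by simp⟩⟩
  | cons e E' IH =>
    obtain ⟨a, b⟩ := e
    have hL' : ∀ a' : α, (E'.filter (fun e => e.1 = a')).card ≤ Δ := fun a' =>
      le_trans (Multiset.card_le_card
        (Multiset.filter_le_filter _ (Multiset.le_cons_self _ _))) (hL a')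
    have hR' : ∀ b' : β, (E'.filter (fun e => e.2 = b')).card ≤ Δ := fun b' =>
      le_trans (Multiset.card_le_card
        (Multiset.filter_le_filter _ (Multiset.le_cons_self _ _))) (hR b')
    obtain ⟨M, hsum, hM⟩ := IH hL' hR'
    have hcE : (E'.filter (fun e => e.1 = a)).card + 1 ≤ Δ := by
      have := hL a
      have h0 : Multiset.filter (fun e => e.1 = a) ((a, b) ::ₘ E')
          = (a, b) ::ₘ Multiset.filter (fun e => e.1 = a) E' :=
        Multiset.filter_cons_of_pos _ rfl
      rw [h0, Multiset.card_cons] at this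
      omega
    have hcE2 : (E'.filter (fun e => e.2 = b)).card + 1 ≤ Δ := by
      have := hR b
      have h0 : Multiset.filter (fun e => e.2 = b) ((a, b) ::ₘ E')
          = (a, b) ::ₘ Multiset.filter (fun e => e.2 = b) E' :=
        Multiset.filter_cons_of_pos _ rfl
      rw [h0, Multiset.card_cons] at this
      omega
    have hAfree : ∃ i, a ∉ (M i).map Prod.fst := by
      apply free_colour
      have heq : ∑ i, (((M i).map Prod.fst).filter (fun x => x = a)).card
          = (E'.filter (fun e => e.1 = a)).card := by
        simp only [card_filter_map]
        rw [← card_filter_finsum Finset.univ M (fun e => e.1 = a), hsum]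
      omega
    have hBfree : ∃ j, b ∉ (M j).map Prod.snd := by
      apply free_colour
      have heq : ∑ i, (((M i).map Prod.snd).filter (fun x => x = b)).card
          = (E'.filter (fun e => e.2 = b)).card := by
        simp only [card_filter_map]
        rw [← card_filter_finsum Finset.univ M (fun e => e.2 = b), hsum]
      omega
    obtain ⟨i, hia⟩ := hAfree
    obtain ⟨j, hjb⟩ := hBfree
    by_cases hij : i = j
    · subst hij
      refine ⟨Function.update M i ((a, b) ::ₘ M i), ?_, ?_⟩
      · rw [Finset.sum_update_of_mem (Finset.mem_univ i), ← hsum,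
          ← Finset.add_sum_erase _ M (Finset.mem_univ i), Multiset.cons_add,
          Finset.erase_eq]
      · intro k
        by_cases hk : k = i
        · subst hk
          rw [Function.update_self, Multiset.map_cons, Multiset.map_cons]
          exact ⟨Multiset.nodup_cons.mpr ⟨hia, (hM k).1⟩,
            Multiset.nodup_cons.mpr ⟨hjb, (hM k).2⟩⟩
        · rw [Function.update_of_ne hk]
          exact hM k
    · obtain ⟨P', Q', hPQ, h11, h12, h21, h22, haP', hbP'⟩ :=
        kempe_swap ((M i + M j).card) (M i) (M j) le_rfl
          (hM i).1 (hM i).2 (hM j).1 (hM j).2 a b hia hjb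
      refine ⟨fun k => if k = i then (a, b) ::ₘ P' else if k = j then Q' else M k, ?_, ?_⟩
      · have hsplit : ∀ f : Fin Δ → Multiset (α × β),
            ∑ k, f k = f i + (f j + ∑ k ∈ (Finset.univ.erase i).erase j, f k) := by
          intro f
          rw [← Finset.add_sum_erase _ f (Finset.mem_univ i),
            ← Finset.add_sum_erase _ f
              (Finset.mem_erase.mpr ⟨Ne.symm hij, Finset.mem_univ j⟩)]
        rw [hsplit] at hsum ⊢
        have hrest : ∑ k ∈ (Finset.univ.erase i).erase j,
            (if k = i then (a, b) ::ₘ P' else if k = j then Q' else M k) =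
            ∑ k ∈ (Finset.univ.erase i).erase j, M k := by
          apply Finset.sum_congr rfl
          intro k hk
          rw [Finset.mem_erase, Finset.mem_erase] at hk
          rw [if_neg hk.2.1, if_neg hk.1]
        rw [hrest]
        have e1 : (if i = i then (a, b) ::ₘ P' else if i = j then Q' else M i)
            = (a, b) ::ₘ P' := if_pos rfl
        have e2 : (if j = i then (a, b) ::ₘ P' else if j = j then Q' else M j)
            = Q' := by
          rw [if_neg (show ¬j = i from fun h => hij h.symm), if_pos rfl]
        rw [e1, e2, Multiset.cons_add, ← hsum]
        congr 1
        rw [← add_assoc, hPQ, add_assoc]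
      · intro k
        beta_reduce
        by_cases hk : k = i
        · subst hk
          rw [if_pos rfl, Multiset.map_cons, Multiset.map_cons]
          exact ⟨Multiset.nodup_cons.mpr ⟨haP', h11⟩,
            Multiset.nodup_cons.mpr ⟨hbP', h12⟩⟩
        · rw [if_neg hk]
          by_cases hk' : k = j
          · rw [if_pos hk']
            exact ⟨h21, h22⟩
          · rw [if_neg hk']
            exact hM k
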